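/- Let f, g ∈ ℝ^n × ℝ^m and η = (α, β) ∈ ℝ^n × ℝ^m, and write (φ, γ) := (f − α, g − β) and P := P(f,g). Then the difference of Jacobians applied to (φ, γ) satisfies componentwise: the i-th of the first n components of [J_F(α,β) − J_F(f,g)](φ, γ) equals (1/ε) Σ_j P_{ij} (e^{(φ_i + γ_j)/ε} − 1)(φ_i + γ_j), and the j-th of the last m components equals (1/ε) Σ_i P_{ij} (e^{(φ_i + γ_j)/ε} − 1)(φ_i + γ_j). -/

import Mathlib

open Matrix

/-- Componentwise formula for the difference of Jacobians applied to
`(φ, γ) := (f − α, g − β)`: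
the `i`-th of the first `n` components of `[J_F(α,β) − J_F(f,g)](φ, γ)` equals
`(1/ε) Σ_j P_{ij} (e^{(φ_i + γ_j)/ε} − 1)(φ_i + γ_j)`, and the `j`-th of the last `m`
components equals `(1/ε) Σ_i P_{ij} (e^{(φ_i + γ_j)/ε} − 1)(φ_i + γ_j)`. -/
theorem jacobian_difference_componentwise (n m : ℕ) (C : Matrix (Fin n) (Fin m) ℝ)
    (ε : ℝ) (hε : 0 < ε) (f α : Fin n → ℝ) (g β : Fin m → ℝ) :
    let Jm : (Fin n → ℝ) → (Fin m → ℝ) → Matrix (Fin n ⊕ Fin m) (Fin n ⊕ Fin m) ℝ :=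
      fun u v =>
        let Q : Matrix (Fin n) (Fin m) ℝ :=
          fun i j => Real.exp (-u i / ε) * Real.exp (-C i j / ε) * Real.exp (-v j / ε)
        (1 / ε) • Matrix.fromBlocks (Matrix.diagonal (Q *ᵥ 1)) Q
          Qᵀ (Matrix.diagonal (Qᵀ *ᵥ 1))
    let P : Matrix (Fin n) (Fin m) ℝ :=
      fun i j => Real.exp (-f i / ε) * Real.exp (-C i j / ε) * Real.exp (-g j / ε)
    let φ : Fin n → ℝ := f - α
    let γ : Fin m → ℝ := g - β
    (∀ i : Fin n,
        ((Jm α β - Jm f g) *ᵥ Sum.elim φ γ) (Sum.inl i) =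
          (1 / ε) * ∑ j : Fin m,
            P i j * (Real.exp ((φ i + γ j) / ε) - 1) * (φ i + γ j)) ∧
      (∀ j : Fin m,
        ((Jm α β - Jm f g) *ᵥ Sum.elim φ γ) (Sum.inr j) =
          (1 / ε) * ∑ i : Fin n,
            P i j * (Real.exp ((φ i + γ j) / ε) - 1) * (φ i + γ j)) := by
  intro Jm P φ γ
  have hε' : ε ≠ 0 := ne_of_gt hε
  have hQ : ∀ (i : Fin n) (j : Fin m),
      Real.exp (-α i / ε) * Real.exp (-C i j / ε) * Real.exp (-β j / ε) =
        P i j * Real.exp ((φ i + γ j) / ε) := by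
    intro i j
    simp only [P, φ, γ, Pi.sub_apply, ← Real.exp_add]
    congr 1
    field_simp
    ring
  constructor
  · intro i
    simp only [Jm, Matrix.sub_mulVec, Matrix.smul_mulVec, Matrix.fromBlocks_mulVec,
      Pi.sub_apply, Pi.smul_apply, Sum.elim_inl, Pi.add_apply, smul_eq_mul,
      Matrix.mulVec_diagonal]
    erw [Matrix.fromBlocks_mulVec, Matrix.fromBlocks_mulVec]
    simp only [Sum.elim_inl, Pi.add_apply, Matrix.mulVec_diagonal]
    simp only [Matrix.mulVec, dotProduct, Pi.one_apply, mul_one, Matrix.transpose_apply]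
    rw [← mul_sub]
    congr 1
    rw [Finset.sum_mul, Finset.sum_mul, ← Finset.sum_add_distrib, ← Finset.sum_add_distrib,
      ← Finset.sum_sub_distrib]
    exact Finset.sum_congr rfl fun j _ => by rw [hQ i j]; simp only [Sum.elim_comp_inl, Sum.elim_comp_inr]; ring
  · intro j
    simp only [Jm, Matrix.sub_mulVec, Matrix.smul_mulVec, Matrix.fromBlocks_mulVec,
      Pi.sub_apply, Pi.smul_apply, Sum.elim_inr, Pi.add_apply, smul_eq_mul,
      Matrix.mulVec_diagonal]
    erw [Matrix.fromBlocks_mulVec, Matrix.fromBlocks_mulVec]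
    simp only [Sum.elim_inr, Pi.add_apply, Matrix.mulVec_diagonal]
    simp only [Matrix.mulVec, dotProduct, Pi.one_apply, mul_one, Matrix.transpose_apply]
    rw [← mul_sub]
    congr 1
    rw [Finset.sum_mul, Finset.sum_mul, ← Finset.sum_add_distrib, ← Finset.sum_add_distrib,
      ← Finset.sum_sub_distrib]
    exact Finset.sum_congr rfl fun i _ => by erw [Matrix.transpose_apply, Matrix.transpose_apply]; beta_reduce; rw [hQ i j]; simp only [Sum.elim_comp_inl, Sum.elim_comp_inr]; ring
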